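/- Suppose z_1 < z_2 < ... < z_n are real numbers and y ∈ ℝ^n. For each u ∈ ℝ^n, let 𝒫(u) be the set of minimizers of P ↦ Σ_{i,j} (z_i − u_j)^2 P_{ij} over the scaled Birkhoff polytope B(n,n). Then the infimum of (1/n) Σ_{i=1}^n (y_i − ŷ_i)^2 over all ŷ of the form ŷ = nPu with u ∈ ℝ^n and P ∈ 𝒫(u) equals the minimum of (1/n) Σ_{i=1}^n (y_i − v_i)^2 over all nondecreasing vectors v ∈ ℝ^n (i.e., the optimal value of standard isotonic regression). -/

import Mathlib

/-- The scaled Birkhoff polytope `B(n,k)`: nonnegative matrices whose rows sum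
to `1/n` and whose columns sum to `1/k`. -/
def scaledBirkhoff (n k : ℕ) : Set (Matrix (Fin n) (Fin k) ℝ) :=
  {P | (∀ i j, 0 ≤ P i j) ∧ (∀ i, ∑ j, P i j = 1 / n) ∧ (∀ j, ∑ i, P i j = 1 / k)}

/-- The transport cost `Σ_{i,j} C_{ij} P_{ij}` with `C_{ij} = (z_i − u_j)^2`. -/
def transportCost {n k : ℕ} (z : Fin n → ℝ) (u : Fin k → ℝ)
    (P : Matrix (Fin n) (Fin k) ℝ) : ℝ :=
  ∑ i, ∑ j, (z i - u j) ^ 2 * P i j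

lemma sum_single {n : ℕ} (c : Fin n → Fin n → ℝ) (I J J' : Fin n) (ε : ℝ) :
    ∑ a, ∑ b, c a b * (if a = I then (if b = J then ε else 0) - (if b = J' then ε else 0) else 0)
    = ε * (c I J - c I J') := by
  rw [Finset.sum_eq_single I]
  · simp [mul_sub, mul_ite, Finset.sum_sub_distrib, Finset.sum_ite_eq']
    ring
  · intro a _ ha; simp [ha]
  · simp

lemma exchange_mono {n : ℕ} (z u : Fin n → ℝ) (hz : StrictMono z)
    (P : Matrix (Fin n) (Fin n) ℝ) (hP : P ∈ scaledBirkhoff n n)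
    (hopt : ∀ Q ∈ scaledBirkhoff n n, transportCost z u P ≤ transportCost z u Q)
    {i i' j j' : Fin n} (hii : i < i') (hj : 0 < P i j) (hj' : 0 < P i' j') :
    u j ≤ u j' := by
  by_cases hjj : j = j'
  · subst hjj; exact le_refl _
  obtain ⟨hPnn, hProw, hPcol⟩ := hP
  set ε := min (P i j) (P i' j') with hε
  have hε0 : 0 < ε := lt_min hj hj'
  have hne : i ≠ i' := hii.ne
  set D : Matrix (Fin n) (Fin n) ℝ := fun a b =>
    (if a = i then (if b = j' then ε else 0) - (if b = j then ε else 0) else 0) +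
    (if a = i' then (if b = j then ε else 0) - (if b = j' then ε else 0) else 0) with hD
  set Q : Matrix (Fin n) (Fin n) ℝ := fun a b => P a b + D a b with hQ
  have hQmem : Q ∈ scaledBirkhoff n n := by
    refine ⟨?_, ?_, ?_⟩
    · intro a b
      simp only [hQ, hD]
      by_cases ha : a = i <;> by_cases ha' : a = i' <;>
        [exact absurd (ha.symm.trans ha') hne; skip; skip; skip] <;>
        by_cases hb : b = j <;> by_cases hb' : b = j' <;>
        simp_all <;>
        linarith [hPnn a b, hPnn i j, hPnn i' j', hPnn i j', hPnn i' j,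
          min_le_left (P i j) (P i' j'),
          min_le_right (P i j) (P i' j'), le_min (hPnn i j) (hPnn i' j')]
    · intro a
      have h0 : ∑ b, D a b = 0 := by
        simp only [hD]
        rw [Finset.sum_add_distrib]
        by_cases ha : a = i <;> by_cases ha' : a = i' <;>
          simp [ha, ha', Finset.sum_sub_distrib, Finset.sum_ite_eq']
      simp [hQ, Finset.sum_add_distrib, h0, hProw a]
    · intro b
      have h0 : ∑ a, D a b = 0 := by
        simp only [hD]
        rw [Finset.sum_add_distrib]
        simp [Finset.sum_ite_eq']
        try ring
      simp [hQ, Finset.sum_add_distrib, h0, hPcol b]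
  have hsplit : transportCost z u Q = transportCost z u P
      + (∑ a, ∑ b, (z a - u b) ^ 2 *
          (if a = i then (if b = j' then ε else 0) - (if b = j then ε else 0) else 0))
      + (∑ a, ∑ b, (z a - u b) ^ 2 *
          (if a = i' then (if b = j then ε else 0) - (if b = j' then ε else 0) else 0)) := by
    simp only [transportCost, hQ, hD, mul_add, Finset.sum_add_distrib]
    ring
  rw [sum_single (fun a b => (z a - u b) ^ 2) i j' j ε,
      sum_single (fun a b => (z a - u b) ^ 2) i' j j' ε] at hsplit
  have h0 := hopt Q hQmem
  rw [hsplit] at h0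
  by_contra hlt
  push_neg at hlt
  have h2 : 0 < z i' - z i := by have := hz hii; linarith
  have h3 : u j' - u j < 0 := by linarith
  nlinarith [h0, hε0, mul_pos h2 (neg_pos.mpr h3), mul_pos hε0 (mul_pos h2 (neg_pos.mpr h3))]

lemma yhat_mono {n : ℕ} (hn : 0 < n) (z u : Fin n → ℝ) (hz : StrictMono z)
    (P : Matrix (Fin n) (Fin n) ℝ) (hP : P ∈ scaledBirkhoff n n)
    (hopt : ∀ Q ∈ scaledBirkhoff n n, transportCost z u P ≤ transportCost z u Q) :
    Monotone (fun i => (n : ℝ) * ∑ j, P i j * u j) := by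
  intro i i' hle
  rcases eq_or_lt_of_le hle with h | hii
  · subst h; exact le_refl _
  obtain ⟨hPnn, hProw, hPcol⟩ := hP
  have hn' : (0:ℝ) < n := by exact_mod_cast hn
  have expand : ∑ j, ∑ j', P i j * P i' j' * (u j' - u j)
      = (∑ j, P i j) * (∑ j', P i' j' * u j') - (∑ j, P i j * u j) * (∑ j', P i' j') := by
    rw [Finset.sum_mul, Finset.sum_mul, ← Finset.sum_sub_distrib]
    refine Finset.sum_congr rfl fun j _ => ?_
    rw [Finset.mul_sum, Finset.mul_sum, ← Finset.sum_sub_distrib]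
    exact Finset.sum_congr rfl fun j' _ => by ring
  rw [hProw i, hProw i'] at expand
  have hnn : 0 ≤ ∑ j, ∑ j', P i j * P i' j' * (u j' - u j) := by
    refine Finset.sum_nonneg fun j _ => Finset.sum_nonneg fun j' _ => ?_
    by_cases h1 : 0 < P i j
    · by_cases h2 : 0 < P i' j'
      · have hu := exchange_mono z u hz P ⟨hPnn, hProw, hPcol⟩ hopt hii h1 h2
        exact mul_nonneg (mul_nonneg h1.le h2.le) (by linarith)
      · have : P i' j' = 0 := le_antisymm (not_lt.1 h2) (hPnn i' j')
        simp [this]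
    · have : P i j = 0 := le_antisymm (not_lt.1 h1) (hPnn i j)
      simp [this]
  rw [expand] at hnn
  have hAB : (∑ j, P i j * u j) ≤ ∑ j', P i' j' * u j' := by
    have h1n : (0:ℝ) < 1/n := by positivity
    nlinarith [hnn, h1n]
  exact mul_le_mul_of_nonneg_left hAB hn'.le

lemma diag_mem {n : ℕ} (hn : 0 < n) :
    (fun i j => if i = j then (1/(n:ℝ)) else 0) ∈ scaledBirkhoff n n := by
  refine ⟨fun i j => ?_, fun i => ?_, fun j => ?_⟩
  · dsimp only; split <;> positivity
  · simp [Finset.sum_ite_eq]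
  · simp [Finset.sum_ite_eq']

lemma diag_cost {n : ℕ} (z v : Fin n → ℝ) :
    transportCost z v (fun i j => if i = j then (1/(n:ℝ)) else 0)
      = (1/(n:ℝ)) * ∑ i, (z i - v i) ^ 2 := by
  simp only [transportCost, mul_ite, mul_zero, Finset.sum_ite_eq, Finset.mem_univ, if_true]
  rw [Finset.mul_sum]
  exact Finset.sum_congr rfl fun i _ => by ring

lemma key_potential {n : ℕ} (hn : 0 < n) (z v : Fin n → ℝ) (hz : StrictMono z)
    (hv : Monotone v) :
    ∃ b : Fin n → ℝ, ∀ i j : Fin n, 2 * z i * (v j - v i) ≤ b j - b i := by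
  have hpos : ∀ m : ℕ, min m (n-1) < n := fun m => by omega
  set V : ℕ → ℝ := fun m => v ⟨min m (n-1), hpos m⟩ with hVdef
  set Z : ℕ → ℝ := fun m => z ⟨min m (n-1), hpos m⟩ with hZdef
  refine ⟨fun jf => ∑ m ∈ Finset.range jf.val, 2 * Z (m+1) * (V (m+1) - V m), ?_⟩
  intro i j
  have hV : ∀ m : Fin n, V m.val = v m := fun m => by
    have hm := m.isLt
    simp only [hVdef]; congr 1; exact Fin.ext (by simp [Fin.val_mk]; omega)
  have hZ : ∀ m : Fin n, Z m.val = z m := fun m => by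
    have hm := m.isLt
    simp only [hZdef]; congr 1; exact Fin.ext (by simp [Fin.val_mk]; omega)
  have hVmono : Monotone V := fun a b hab => hv (Fin.mk_le_mk.mpr (by omega))
  have hZmono : Monotone Z := fun a b hab => hz.monotone (Fin.mk_le_mk.mpr (by omega))
  have tele : ∀ a c : ℕ, a ≤ c →
      ∑ m ∈ Finset.Ico a c, (V (m+1) - V m) = V c - V a := fun a c h => by
    rw [Finset.sum_Ico_eq_sub _ h, Finset.sum_range_sub V, Finset.sum_range_sub V]; ring
  rcases le_or_gt i.val j.val with h | h
  · have hdiff : (∑ m ∈ Finset.range j.val, 2 * Z (m+1) * (V (m+1) - V m))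
        - ∑ m ∈ Finset.range i.val, 2 * Z (m+1) * (V (m+1) - V m)
        = ∑ m ∈ Finset.Ico i.val j.val, 2 * Z (m+1) * (V (m+1) - V m) := by
      rw [Finset.sum_Ico_eq_sub _ h]
    rw [hdiff]
    calc 2 * z i * (v j - v i)
        = ∑ m ∈ Finset.Ico i.val j.val, 2 * z i * (V (m+1) - V m) := by
          rw [← Finset.mul_sum, tele _ _ h, hV, hV]
      _ ≤ ∑ m ∈ Finset.Ico i.val j.val, 2 * Z (m+1) * (V (m+1) - V m) := by
          refine Finset.sum_le_sum fun m hm => ?_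
          rw [Finset.mem_Ico] at hm
          have hVd : 0 ≤ V (m+1) - V m := by
            have := hVmono (Nat.le_succ m); linarith
          have hZi : z i ≤ Z (m+1) := by
            rw [← hZ i]; exact hZmono (by omega)
          nlinarith
  · have hdiff : (∑ m ∈ Finset.range j.val, 2 * Z (m+1) * (V (m+1) - V m))
        - ∑ m ∈ Finset.range i.val, 2 * Z (m+1) * (V (m+1) - V m)
        = -∑ m ∈ Finset.Ico j.val i.val, 2 * Z (m+1) * (V (m+1) - V m) := by
      rw [Finset.sum_Ico_eq_sub _ h.le]; ring
    rw [hdiff]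
    have hle : ∑ m ∈ Finset.Ico j.val i.val, 2 * Z (m+1) * (V (m+1) - V m)
        ≤ ∑ m ∈ Finset.Ico j.val i.val, 2 * z i * (V (m+1) - V m) := by
      refine Finset.sum_le_sum fun m hm => ?_
      rw [Finset.mem_Ico] at hm
      have hVd : 0 ≤ V (m+1) - V m := by
        have := hVmono (Nat.le_succ m); linarith
      have hZi : Z (m+1) ≤ z i := by
        rw [← hZ i]; exact hZmono (by omega)
      nlinarith
    have ht : ∑ m ∈ Finset.Ico j.val i.val, 2 * z i * (V (m+1) - V m)
        = 2 * z i * (v i - v j) := by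
      rw [← Finset.mul_sum, tele _ _ h.le, hV, hV]
    linarith

lemma diag_opt {n : ℕ} (hn : 0 < n) (z v : Fin n → ℝ) (hz : StrictMono z)
    (hv : Monotone v) :
    ∀ Q ∈ scaledBirkhoff n n,
      transportCost z v (fun i j => if i = j then (1/(n:ℝ)) else 0) ≤ transportCost z v Q := by
  obtain ⟨b, hb⟩ := key_potential hn z v hz hv
  set a : Fin n → ℝ := fun i => 2 * z i * v i - b i with ha
  rintro Q ⟨hQnn, hQrow, hQcol⟩
  have stepA : ∑ i, ∑ j, ((z i)^2 + (v j)^2 - a i - b j) * Q i j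
      = (1/(n:ℝ)) * ∑ i, (z i - v i)^2 := by
    have split : ∑ i, ∑ j, ((z i)^2 + (v j)^2 - a i - b j) * Q i j
        = (∑ i, ∑ j, (z i)^2 * Q i j) + (∑ i, ∑ j, (v j)^2 * Q i j)
          - (∑ i, ∑ j, a i * Q i j) - (∑ i, ∑ j, b j * Q i j) := by
      simp only [← Finset.sum_sub_distrib, ← Finset.sum_add_distrib]
      exact Finset.sum_congr rfl fun i _ => Finset.sum_congr rfl fun j _ => by ring
    have T1 : ∑ i, ∑ j, (z i)^2 * Q i j = ∑ i, (z i)^2 * (1/(n:ℝ)) :=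
      Finset.sum_congr rfl fun i _ => by rw [← Finset.mul_sum, hQrow i]
    have T2 : ∑ i, ∑ j, (v j)^2 * Q i j = ∑ j, (v j)^2 * (1/(n:ℝ)) := by
      rw [Finset.sum_comm]
      exact Finset.sum_congr rfl fun j _ => by rw [← Finset.mul_sum, hQcol j]
    have T3 : ∑ i, ∑ j, a i * Q i j = ∑ i, a i * (1/(n:ℝ)) :=
      Finset.sum_congr rfl fun i _ => by rw [← Finset.mul_sum, hQrow i]
    have T4 : ∑ i, ∑ j, b j * Q i j = ∑ j, b j * (1/(n:ℝ)) := by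
      rw [Finset.sum_comm]
      exact Finset.sum_congr rfl fun j _ => by rw [← Finset.mul_sum, hQcol j]
    rw [split, T1, T2, T3, T4, Finset.mul_sum, ← Finset.sum_add_distrib,
      ← Finset.sum_sub_distrib, ← Finset.sum_sub_distrib]
    exact Finset.sum_congr rfl fun i _ => by simp only [ha]; ring
  have stepB : ∑ i, ∑ j, ((z i)^2 + (v j)^2 - a i - b j) * Q i j ≤ transportCost z v Q := by
    refine Finset.sum_le_sum fun i _ => Finset.sum_le_sum fun j _ => ?_
    have hfac : (z i)^2 + (v j)^2 - a i - b j ≤ (z i - v j)^2 := by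
      have := hb i j
      simp only [ha]
      nlinarith
    exact mul_le_mul_of_nonneg_right hfac (hQnn i j)
  rw [diag_cost, ← stepA]
  exact stepB

/-- Brenier isotonic regression in 1D achieves exactly the
optimal value of standard isotonic regression. -/
theorem brenierIR_1d_equals_isotonic (n : ℕ) (hn : 0 < n)
    (z : Fin n → ℝ) (hz : StrictMono z) (y : Fin n → ℝ) :
    sInf {c : ℝ | ∃ (u : Fin n → ℝ) (P : Matrix (Fin n) (Fin n) ℝ),
        P ∈ scaledBirkhoff n n ∧
        (∀ Q ∈ scaledBirkhoff n n, transportCost z u P ≤ transportCost z u Q) ∧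
        c = (1 / (n : ℝ)) * ∑ i, (y i - (n : ℝ) * ∑ j, P i j * u j) ^ 2} =
    sInf {c : ℝ | ∃ v : Fin n → ℝ, Monotone v ∧
        c = (1 / (n : ℝ)) * ∑ i, (y i - v i) ^ 2} := by
  have hsets : {c : ℝ | ∃ (u : Fin n → ℝ) (P : Matrix (Fin n) (Fin n) ℝ),
        P ∈ scaledBirkhoff n n ∧
        (∀ Q ∈ scaledBirkhoff n n, transportCost z u P ≤ transportCost z u Q) ∧
        c = (1 / (n : ℝ)) * ∑ i, (y i - (n : ℝ) * ∑ j, P i j * u j) ^ 2} =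
      {c : ℝ | ∃ v : Fin n → ℝ, Monotone v ∧
        c = (1 / (n : ℝ)) * ∑ i, (y i - v i) ^ 2} := by
    ext c
    constructor
    · rintro ⟨u, P, hP, hopt, rfl⟩
      exact ⟨fun i => (n : ℝ) * ∑ j, P i j * u j, yhat_mono hn z u hz P hP hopt, rfl⟩
    · rintro ⟨v, hv, rfl⟩
      refine ⟨v, fun i j => if i = j then (1/(n:ℝ)) else 0, diag_mem hn,
        diag_opt hn z v hz hv, ?_⟩
      have hid : ∀ i : Fin n, (n : ℝ) * ∑ j, (if i = j then (1/(n:ℝ)) else 0) * v j = v i := by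
        intro i
        have hn' : (n:ℝ) ≠ 0 := Nat.cast_ne_zero.mpr hn.ne'
        simp [ite_mul, Finset.sum_ite_eq]
        field_simp
      simp only [hid]
  rw [hsets]
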